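/- There exist constants c > 0 and ε₀ > 0 such that for every ε with 0 < ε < ε₀ and all points A, B, C of the Euclidean plane satisfying dist A B = 1 + ε, 1 ≤ dist A C ≤ 1 + ε and 1 ≤ dist B C ≤ 1 + ε, the area of the triangle A B C is strictly greater than √3/4 + c·ε. -/

import Mathlib

open MeasureTheory Pointwise

section Aux

local notation "E2" => EuclideanSpace ℝ (Fin 2)

private lemma aux_mem_hull {u v : E2} {a b : ℝ} (ha : 0 ≤ a) (hb : 0 ≤ b) (hab : a + b ≤ 1) :
    a • u + b • v ∈ convexHull ℝ ({0, u, v} : Set E2) := by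
  have h := (convex_convexHull ℝ ({0, u, v} : Set E2)).sum_mem
    (t := (Finset.univ : Finset (Fin 3))) (w := ![1 - a - b, a, b]) (z := ![0, u, v])
    (by intro i _; fin_cases i <;> simp <;> linarith)
    (by simp [Fin.sum_univ_three]; ring)
    (by intro i _; apply subset_convexHull; fin_cases i <;> simp)
  simpa [Fin.sum_univ_three] using h

private lemma aux_det_le_two_vol (u v : E2) : ENNReal.ofReal |u 0 * v 1 - u 1 * v 0| ≤
    2 * volume (convexHull ℝ ({0, u, v} : Set E2)) := by
  set T := convexHull ℝ ({0, u, v} : Set E2) with hT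
  have hvolP : volume (parallelepiped ![u, v]) = ENNReal.ofReal |u 0 * v 1 - u 1 * v 0| := by
    rw [← (EuclideanSpace.basisFun (Fin 2) ℝ).addHaar_eq_volume, Measure.addHaar_parallelepiped]
    congr 1
    rw [Module.Basis.det_apply, Matrix.det_fin_two]
    simp [Module.Basis.toMatrix_apply]
    ring
  have hsub : parallelepiped ![u, v] ⊆ T ∪ ((u + v) +ᵥ (-T)) := by
    rintro x hx
    rw [mem_parallelepiped_iff] at hx
    obtain ⟨t, ht, rfl⟩ := hx
    rw [Set.mem_Icc] at ht
    have h0 : (0:ℝ) ≤ t 0 := ht.1 0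
    have h1 : (0:ℝ) ≤ t 1 := ht.1 1
    have h0' : t 0 ≤ 1 := ht.2 0
    have h1' : t 1 ≤ 1 := ht.2 1
    have hsum : ∑ i, t i • ![u, v] i = t 0 • u + t 1 • v := by
      simp [Fin.sum_univ_two]
    rw [hsum]
    by_cases hc : t 0 + t 1 ≤ 1
    · exact Or.inl (aux_mem_hull h0 h1 hc)
    · right
      refine ⟨-((1 - t 0) • u + (1 - t 1) • v), ?_, ?_⟩
      · rw [Set.mem_neg, neg_neg]
        exact aux_mem_hull (by linarith) (by linarith) (by linarith)
      · simp only [vadd_eq_add]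
        module
  calc ENNReal.ofReal |u 0 * v 1 - u 1 * v 0| = volume (parallelepiped ![u, v]) := hvolP.symm
    _ ≤ volume (T ∪ ((u + v) +ᵥ (-T))) := measure_mono hsub
    _ ≤ volume T + volume ((u + v) +ᵥ (-T)) := measure_union_le _ _
    _ = volume T + volume T := by
        rw [MeasureTheory.measure_vadd (μ := volume), volume.measure_neg]
    _ = 2 * volume T := (two_mul _).symm

private lemma aux_lagrange (u v : E2) : (u 0 * v 1 - u 1 * v 0)^2 =
    ‖u‖^2 * ‖v‖^2 - (inner ℝ u v : ℝ)^2 := by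
  have hu : ‖u‖^2 = u 0 ^ 2 + u 1 ^ 2 := by
    rw [EuclideanSpace.norm_eq, Real.sq_sqrt (by positivity)]
    simp [Fin.sum_univ_two]
  have hv : ‖v‖^2 = v 0 ^ 2 + v 1 ^ 2 := by
    rw [EuclideanSpace.norm_eq, Real.sq_sqrt (by positivity)]
    simp [Fin.sum_univ_two]
  have huv : (inner ℝ u v : ℝ) = u 0 * v 0 + u 1 * v 1 := by
    simp [PiLp.inner_apply, Fin.sum_univ_two, RCLike.inner_apply]; try ring
  rw [hu, hv, huv]; ring

private lemma aux_ineq {ε b c d : ℝ} (hε : 0 < ε) (hε' : ε < 1/4)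
    (hb1 : 1 ≤ b) (hb2 : b ≤ 1+ε) (hc1 : 1 ≤ c) (hc2 : c ≤ 1+ε)
    (hl : d^2 = (1+ε)^2 * b^2 - (((1+ε)^2 + b^2 - c^2)/2)^2) :
    Real.sqrt 3 / 2 + ε/4 < |d| := by
  have hd2 : d^2 ≥ (3 + 2*ε)/4 := by
    have h1 : 3 - 2*ε - ε^2 ≤ (b + c)^2 - (1+ε)^2 := by nlinarith [sq_nonneg (b + c - 2)]
    have h2 : 1 + 2*ε ≤ (1+ε)^2 - (b - c)^2 := by
      nlinarith [mul_nonneg (by linarith : (0:ℝ) ≤ ε - (b - c)) (by linarith : (0:ℝ) ≤ ε + (b - c))]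
    have hkey : 4 * d^2 = ((b + c)^2 - (1+ε)^2) * ((1+ε)^2 - (b - c)^2) := by
      rw [hl]; ring
    have hprod : (3 - 2*ε - ε^2) * (1 + 2*ε) ≤
        ((b + c)^2 - (1+ε)^2) * ((1+ε)^2 - (b - c)^2) :=
      mul_le_mul h1 h2 (by linarith) (by nlinarith [mul_lt_mul_of_pos_left hε' hε])
    nlinarith [mul_lt_mul_of_pos_left hε' hε, mul_lt_mul_of_pos_left hε' (mul_pos hε hε)]
  have hs3 : Real.sqrt 3 < 1.75 := by
    rw [show (1.75:ℝ) = Real.sqrt (1.75^2) by rw [Real.sqrt_sq]; norm_num]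
    exact Real.sqrt_lt_sqrt (by norm_num) (by norm_num)
  by_contra h
  push_neg at h
  have h2 : d^2 ≤ (Real.sqrt 3 / 2 + ε/4)^2 := by
    rw [← sq_abs]
    exact pow_le_pow_left₀ (abs_nonneg d) h 2
  have h3 : (Real.sqrt 3)^2 = 3 := Real.sq_sqrt (by norm_num)
  nlinarith [Real.sqrt_nonneg 3, mul_lt_mul_of_pos_right hs3 hε]

end Aux

/-- There are constants `c > 0` and `ε₀ > 0` such that for all `0 < ε < ε₀`, every triangle
`A B C` with `dist A B = 1 + ε` and the other two sides of lengths in `[1, 1 + ε]` has area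
strictly greater than `√3/4 + c·ε`. -/
theorem area_triangle_gt_of_perturbation :
    ∃ c > (0 : ℝ), ∃ ε₀ > (0 : ℝ), ∀ ε : ℝ, 0 < ε → ε < ε₀ →
      ∀ A B C : EuclideanSpace ℝ (Fin 2),
        dist A B = 1 + ε →
        1 ≤ dist A C → dist A C ≤ 1 + ε →
        1 ≤ dist B C → dist B C ≤ 1 + ε →
        (volume (convexHull ℝ ({A, B, C} : Set (EuclideanSpace ℝ (Fin 2))))).toReal >
          Real.sqrt 3 / 4 + c * ε := by
  refine ⟨1/8, by norm_num, 1/4, by norm_num, ?_⟩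
  intro ε hε hε' A B C hAB hAC1 hAC2 hBC1 hBC2
  set u := B - A with hu
  set v := C - A with hv
  -- reduce to the translated triangle
  have himg : ({A, B, C} : Set (EuclideanSpace ℝ (Fin 2))) =
      (AffineEquiv.constVAdd ℝ (EuclideanSpace ℝ (Fin 2)) A).toAffineMap '' {0, u, v} := by
    simp [Set.image_insert_eq, Set.image_singleton, hu, hv]
  have hvol : volume (convexHull ℝ ({A, B, C} : Set (EuclideanSpace ℝ (Fin 2)))) =
      volume (convexHull ℝ ({0, u, v} : Set (EuclideanSpace ℝ (Fin 2)))) := by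
    rw [himg, ← AffineMap.image_convexHull]
    have : (AffineEquiv.constVAdd ℝ (EuclideanSpace ℝ (Fin 2)) A).toAffineMap ''
        (convexHull ℝ ({0, u, v} : Set (EuclideanSpace ℝ (Fin 2)))) =
        A +ᵥ (convexHull ℝ ({0, u, v} : Set (EuclideanSpace ℝ (Fin 2)))) := rfl
    rw [this, MeasureTheory.measure_vadd (μ := volume)]
  set T := convexHull ℝ ({0, u, v} : Set (EuclideanSpace ℝ (Fin 2))) with hT
  set d := u 0 * v 1 - u 1 * v 0 with hd
  -- side lengths
  have hnu : ‖u‖ = 1 + ε := by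
    rw [hu, ← dist_eq_norm, dist_comm]; exact hAB
  have hnv : ‖v‖ = dist A C := by
    rw [hv, ← dist_eq_norm, dist_comm]
  have hnuv : ‖u - v‖ = dist B C := by
    have h : u - v = B - C := by rw [hu, hv]; abel
    rw [h, ← dist_eq_norm]
  -- inner product in terms of distances
  have hinner : (inner ℝ u v : ℝ) = (‖u‖^2 + ‖v‖^2 - ‖u - v‖^2)/2 := by
    have := @norm_sub_sq_real (EuclideanSpace ℝ (Fin 2)) _ _ u v
    linarith
  have habs : Real.sqrt 3 / 2 + ε/4 < |d| := by
    have hl := aux_lagrange u v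
    rw [← hd, hinner, hnu, hnv, hnuv] at hl
    refine aux_ineq hε hε' hAC1 hAC2 hBC1 hBC2 ?_
    rw [hl]; try ring
  -- volume is finite
  have hfinT : T.Finite → True := fun _ => trivial
  have hcompact : IsCompact T := by
    apply Set.Finite.isCompact_convexHull
    exact (Set.finite_singleton v).insert u |>.insert 0
  have hfin : volume T ≠ ⊤ := hcompact.measure_lt_top.ne
  -- combine
  have hle := aux_det_le_two_vol u v
  rw [← hd, ← hT] at hle
  have hle' : |d| ≤ 2 * (volume T).toReal := by
    have h2top : (2 : ENNReal) * volume T ≠ ⊤ := ENNReal.mul_ne_top (by norm_num) hfin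
    have := ENNReal.toReal_le_toReal (ENNReal.ofReal_ne_top) h2top |>.mpr hle
    rwa [ENNReal.toReal_ofReal (abs_nonneg d), ENNReal.toReal_mul, ENNReal.toReal_ofNat] at this
  rw [hvol]
  linarith
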